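/- There exists a constant c > 0 such that for every δ > 0, every integer A ≥ 1, and every real polynomial q : ℝ → ℝ satisfying 0 ≤ q(j) ≤ δ for all integers j with A ≤ j ≤ 4A, if there is a real number x with (3/2)·A ≤ x ≤ 3A and q(x) > 2δ, then the degree of q is at least c·A. -/

import Mathlib

open Polynomial Finset

/-- Weierstrass product inequality: `1 - ∑ ε ≤ ∏ (1 - ε)`. -/
lemma weierstrass_prod (n : ℕ) (f : ℕ → ℝ) (h0 : ∀ k, 0 ≤ f k) (h1 : ∀ k, f k ≤ 1) :
    1 - ∑ k ∈ range n, f k ≤ ∏ k ∈ range n, (1 - f k) := by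
  induction n with
  | zero => simp
  | succ n ih =>
    rw [Finset.sum_range_succ, Finset.prod_range_succ]
    have hn : 0 ≤ ∑ k ∈ range n, f k := Finset.sum_nonneg fun k _ => h0 k
    nlinarith [h0 n, h1 n, ih]

/-- `∑_{k<K} 1/(2k+1)^2 ≤ 3/2`. -/
lemma sum_inv_odd_sq (K : ℕ) : ∑ k ∈ range K, (1 : ℝ) / (2 * (k : ℝ) + 1) ^ 2 ≤ 3 / 2 := by
  have key : ∀ n : ℕ, ∑ k ∈ range (n+1), (1 : ℝ) / (2 * (k : ℝ) + 1) ^ 2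
      ≤ 5/4 - 1/(4*((n:ℝ)+1)) := by
    intro n
    induction n with
    | zero => norm_num
    | succ n ih =>
      rw [Finset.sum_range_succ]
      have h1 : (0:ℝ) < (n:ℝ) + 1 := by positivity
      have h2 : (0:ℝ) < (n:ℝ) + 2 := by positivity
      have hterm : (1 : ℝ) / (2 * ((n:ℝ)+1) + 1) ^ 2 ≤ 1/(4*((n:ℝ)+1)) - 1/(4*((n:ℝ)+2)) := by
        rw [div_sub_div _ _ (by positivity) (by positivity),
          div_le_div_iff₀ (by positivity) (by positivity)]
        ring_nf
        nlinarith [h1]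
      push_cast at ih ⊢
      rw [show ((n:ℝ)+1+1) = (n:ℝ)+2 by ring]
      linarith
  rcases K with _ | n
  · norm_num
  · have h := key n
    have : (0:ℝ) < 1/(4*((n:ℝ)+1)) := by positivity
    linarith

/-- The key telescoping product inequality. -/
lemma telescope_prod (K j : ℕ) (hj : 1 ≤ j) (hjK : j ≤ K) :
    (∏ k ∈ range K, ((16*(k:ℝ)+7) * (16*(k:ℝ)+9))) ≤
    (-1)^j * ∏ k ∈ range K, ((16*(k:ℝ)+9-16*(j:ℝ)) * (16*(k:ℝ)+7+16*(j:ℝ))) := by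
  have f7pos : ∀ i : ℕ, (0:ℝ) < 16*(i:ℝ)+7 := fun i => by positivity
  have f9pos : ∀ i : ℕ, (0:ℝ) < 16*(i:ℝ)+9 := fun i => by positivity
  -- Split RHS product
  have hsplit : (∏ k ∈ range K, ((16*(k:ℝ)+9-16*(j:ℝ)) * (16*(k:ℝ)+7+16*(j:ℝ))))
      = (∏ k ∈ range K, (16*(k:ℝ)+9-16*(j:ℝ))) * (∏ k ∈ range K, (16*(k:ℝ)+7+16*(j:ℝ))) :=
    Finset.prod_mul_distrib
  -- second factor equals ∏_{i ∈ Ico j (K+j)} (16 i + 7)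
  have h2 : (∏ k ∈ range K, (16*(k:ℝ)+7+16*(j:ℝ))) = ∏ i ∈ Finset.Ico j (K+j), (16*(i:ℝ)+7) := by
    rw [Finset.prod_Ico_eq_prod_range]
    simp only [Nat.add_sub_cancel_left, Nat.add_sub_cancel]
    apply Finset.prod_congr rfl
    intro k _
    push_cast
    ring
  -- first factor: split at j
  have h1 : (∏ k ∈ range K, (16*(k:ℝ)+9-16*(j:ℝ)))
      = (∏ k ∈ Finset.Ico 0 j, (16*(k:ℝ)+9-16*(j:ℝ))) * (∏ k ∈ Finset.Ico j K, (16*(k:ℝ)+9-16*(j:ℝ))) := by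
    rw [Finset.prod_Ico_consecutive _ (Nat.zero_le j) hjK, Finset.range_eq_Ico]
  have h1a : (∏ k ∈ Finset.Ico 0 j, (16*(k:ℝ)+9-16*(j:ℝ))) = (-1)^j * ∏ i ∈ range j, (16*(i:ℝ)+7) := by
    rw [← Finset.range_eq_Ico]
    have : ∀ k ∈ range j, (16*(k:ℝ)+9-16*(j:ℝ)) = (-1) * (16*((j:ℝ)-1-(k:ℝ))+7) := by
      intro k _
      ring
    rw [Finset.prod_congr rfl this, Finset.prod_mul_distrib, Finset.prod_const,
      Finset.card_range]
    congr 1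
    have := Finset.prod_range_reflect (fun i => (16*(i:ℝ)+7)) j
    rw [← this]
    apply Finset.prod_congr rfl
    intro k hk
    have hk' : k < j := Finset.mem_range.mp hk
    have : ((j - 1 - k : ℕ) : ℝ) = (j:ℝ) - 1 - (k:ℝ) := by
      have h1 : k ≤ j - 1 := Nat.le_sub_one_of_lt hk'
      have h2 : 1 ≤ j := hj
      push_cast [Nat.cast_sub h1, Nat.cast_sub h2]
      ring
    rw [this]
  have h1b : (∏ k ∈ Finset.Ico j K, (16*(k:ℝ)+9-16*(j:ℝ))) = ∏ i ∈ range (K-j), (16*(i:ℝ)+9) := by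
    rw [Finset.prod_Ico_eq_prod_range]
    apply Finset.prod_congr rfl
    intro k _
    push_cast
    ring
  -- assemble (-1)^j * RHS = E
  have hE : (-1:ℝ)^j * (∏ k ∈ range K, ((16*(k:ℝ)+9-16*(j:ℝ)) * (16*(k:ℝ)+7+16*(j:ℝ))))
      = (∏ i ∈ range (K+j), (16*(i:ℝ)+7)) * (∏ i ∈ range (K-j), (16*(i:ℝ)+9)) := by
    rw [hsplit, h1, h1a, h1b, h2]
    have hsq : (-1:ℝ)^j * ((-1)^j * ∏ i ∈ range j, (16*(i:ℝ)+7)) = ∏ i ∈ range j, (16*(i:ℝ)+7) := by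
      rw [← mul_assoc, ← pow_add, ← two_mul, pow_mul]
      norm_num
    have hjoin : (∏ i ∈ range j, (16*(i:ℝ)+7)) * (∏ i ∈ Finset.Ico j (K+j), (16*(i:ℝ)+7))
        = ∏ i ∈ range (K+j), (16*(i:ℝ)+7) := by
      rw [Finset.range_eq_Ico, Finset.range_eq_Ico]
      exact Finset.prod_Ico_consecutive (fun i : ℕ => 16*(i:ℝ)+7) (Nat.zero_le j) (Nat.le_add_left j K)
    calc (-1:ℝ)^j * (((-1)^j * ∏ i ∈ range j, (16*(i:ℝ)+7)) * (∏ i ∈ range (K-j), (16*(i:ℝ)+9))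
            * (∏ i ∈ Finset.Ico j (K+j), (16*(i:ℝ)+7)))
        = ((-1:ℝ)^j * ((-1)^j * ∏ i ∈ range j, (16*(i:ℝ)+7)))
            * (∏ i ∈ Finset.Ico j (K+j), (16*(i:ℝ)+7)) * (∏ i ∈ range (K-j), (16*(i:ℝ)+9)) := by
          ring
      _ = (∏ i ∈ range (K+j), (16*(i:ℝ)+7)) * (∏ i ∈ range (K-j), (16*(i:ℝ)+9)) := by
          rw [hsq, hjoin]
  rw [hE]
  -- LHS = ∏_{<K} f7 * (∏_{<K-j} f9 * ∏_{Ico (K-j) K} f9)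
  have hLHS : (∏ k ∈ range K, ((16*(k:ℝ)+7) * (16*(k:ℝ)+9)))
      = (∏ k ∈ range K, (16*(k:ℝ)+7)) * ((∏ i ∈ range (K-j), (16*(i:ℝ)+9)) * (∏ i ∈ Finset.Ico (K-j) K, (16*(i:ℝ)+9))) := by
    rw [Finset.prod_mul_distrib]
    congr 1
    rw [Finset.range_eq_Ico, ← Finset.prod_Ico_consecutive (fun i => (16*(i:ℝ)+9))
      (Nat.zero_le (K-j)) (Nat.sub_le K j), ← Finset.range_eq_Ico]
  have hRHS : (∏ i ∈ range (K+j), (16*(i:ℝ)+7)) * (∏ i ∈ range (K-j), (16*(i:ℝ)+9))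
      = (∏ k ∈ range K, (16*(k:ℝ)+7)) * ((∏ i ∈ range (K-j), (16*(i:ℝ)+9)) * (∏ i ∈ Finset.Ico K (K+j), (16*(i:ℝ)+7))) := by
    have : (∏ i ∈ range (K+j), (16*(i:ℝ)+7))
        = (∏ k ∈ range K, (16*(k:ℝ)+7)) * (∏ i ∈ Finset.Ico K (K+j), (16*(i:ℝ)+7)) := by
      rw [Finset.range_eq_Ico, ← Finset.prod_Ico_consecutive (fun i => (16*(i:ℝ)+7))
        (Nat.zero_le K) (Nat.le_add_right K j), ← Finset.range_eq_Ico]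
    rw [this]; ring
  rw [hLHS, hRHS]
  -- reduce to the Ico comparison
  have hcore : (∏ i ∈ Finset.Ico (K-j) K, (16*(i:ℝ)+9)) ≤ (∏ i ∈ Finset.Ico K (K+j), (16*(i:ℝ)+7)) := by
    rw [Finset.prod_Ico_eq_prod_range, Finset.prod_Ico_eq_prod_range]
    have hKj : K - (K - j) = j := Nat.sub_sub_self hjK
    have hKj2 : K + j - K = j := by omega
    rw [hKj, hKj2]
    apply Finset.prod_le_prod
    · intro t _; positivity
    · intro t _
      have : ((K - j + t : ℕ) : ℝ) = (K:ℝ) - (j:ℝ) + (t:ℝ) := by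
        push_cast [Nat.cast_sub hjK]; ring
      rw [this]
      push_cast
      have : (1:ℝ) ≤ (j:ℝ) := by exact_mod_cast hj
      linarith
  have c1 : (0:ℝ) ≤ ∏ k ∈ range K, (16*(k:ℝ)+7) := Finset.prod_nonneg fun k _ => (f7pos k).le
  have c2 : (0:ℝ) ≤ ∏ i ∈ range (K-j), (16*(i:ℝ)+9) := Finset.prod_nonneg fun k _ => (f9pos k).le
  apply mul_le_mul_of_nonneg_left _ c1
  exact mul_le_mul_of_nonneg_left hcore c2

/-- A polynomial whose values alternate in sign at `n+1` increasing points has degree `≥ n`. -/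
lemma alt_signs_le_natDegree (h : Polynomial ℝ) (n : ℕ) (p : ℕ → ℝ) (hp : StrictMono p)
    (hs : ∀ i, i ≤ n → 0 < (-1:ℝ)^i * h.eval (p i)) : n ≤ h.natDegree := by
  have hne : h ≠ 0 := by
    intro h0
    have := hs 0 (Nat.zero_le n)
    simp [h0] at this
  have hroot : ∀ i, i < n → ∃ r, r ∈ Set.Ioo (p i) (p (i+1)) ∧ h.eval r = 0 := by
    intro i hi
    have hi1 := hs i (le_of_lt hi)
    have hi2 := hs (i+1) hi
    have hcont : ContinuousOn (fun t => h.eval t) (Set.Icc (p i) (p (i+1))) :=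
      (Polynomial.continuous h).continuousOn
    have hlt : p i ≤ p (i+1) := (hp (Nat.lt_succ_self i)).le
    rcases Nat.even_or_odd i with he | ho
    · have h1 : 0 < h.eval (p i) := by
        have : ((-1:ℝ))^i = 1 := he.neg_one_pow
        rw [this] at hi1; linarith
      have h2 : h.eval (p (i+1)) < 0 := by
        have ho1 : Odd (i+1) := Even.add_one he
        have : ((-1:ℝ))^(i+1) = -1 := ho1.neg_one_pow
        rw [this] at hi2; linarith
      have hsub := intermediate_value_Ioo' hlt hcont
      have hmem : (0:ℝ) ∈ Set.Ioo (h.eval (p (i+1))) (h.eval (p i)) := ⟨h2, h1⟩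
      rcases hsub hmem with ⟨r, hr, hr0⟩
      exact ⟨r, hr, hr0⟩
    · have h1 : h.eval (p i) < 0 := by
        have : ((-1:ℝ))^i = -1 := ho.neg_one_pow
        rw [this] at hi1; linarith
      have h2 : 0 < h.eval (p (i+1)) := by
        have he1 : Even (i+1) := Odd.add_one ho
        have : ((-1:ℝ))^(i+1) = 1 := he1.neg_one_pow
        rw [this] at hi2; linarith
      have hsub := intermediate_value_Ioo hlt hcont
      have hmem : (0:ℝ) ∈ Set.Ioo (h.eval (p i)) (h.eval (p (i+1))) := ⟨h1, h2⟩
      rcases hsub hmem with ⟨r, hr, hr0⟩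
      exact ⟨r, hr, hr0⟩
  classical
  choose! r hr hr0 using hroot
  have hrmono : ∀ i j, i < j → j < n → r i < r j := by
    intro i j hij hjn
    have hi : i < n := lt_trans hij hjn
    have h1 : r i < p (i+1) := (hr i hi).2
    have h2 : p j < r j := (hr j hjn).1
    have h3 : p (i+1) ≤ p j := hp.le_iff_le.mpr hij
    linarith
  have hinj : Set.InjOn r (Finset.range n) := by
    intro a ha b hb hab
    simp only [Finset.coe_range, Set.mem_Iio] at ha hb
    by_contra hne'
    rcases lt_or_gt_of_ne hne' with hlt | hlt
    · exact absurd hab (ne_of_lt (hrmono a b hlt hb))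
    · exact absurd hab.symm (ne_of_lt (hrmono b a hlt ha))
  have hsubset : (Finset.range n).image r ⊆ h.roots.toFinset := by
    intro y hy
    rcases Finset.mem_image.mp hy with ⟨i, hi, rfl⟩
    rw [Multiset.mem_toFinset, Polynomial.mem_roots']
    exact ⟨hne, hr0 i (Finset.mem_range.mp hi)⟩
  calc n = ((Finset.range n).image r).card := by
        rw [Finset.card_image_of_injOn hinj, Finset.card_range]
    _ ≤ h.roots.toFinset.card := Finset.card_le_card hsubset
    _ ≤ Multiset.card h.roots := Multiset.toFinset_card_le _
    _ ≤ h.natDegree := Polynomial.card_roots' h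

set_option maxHeartbeats 2000000 in
/-- Core lemma: in the main range the degree is at least `2⌊A/20⌋+1`. -/
lemma key_lemma (δ : ℝ) (hδ : 0 < δ) (A : ℕ) (hA : 20 ≤ A) (q : Polynomial ℝ)
    (hq : ∀ j : ℕ, A ≤ j → j ≤ 4 * A → 0 ≤ q.eval (j : ℝ) ∧ q.eval (j : ℝ) ≤ δ)
    (x : ℝ) (hx1 : (3 / 2) * (A : ℝ) ≤ x) (hx2 : x ≤ 3 * (A : ℝ)) (hxq : 2 * δ < q.eval x)
    (hxint : ∀ n : ℕ, (n:ℝ) ≠ x) :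
    2 * (A / 20) + 1 ≤ q.natDegree := by
  set K := A / 20 with hKdef
  by_contra hcon
  push_neg at hcon
  have hD : q.natDegree ≤ 2 * K := by omega
  -- basic numeric facts
  have hK1 : 1 ≤ K := (Nat.one_le_div_iff (by norm_num)).mpr hA
  have h20K : 20 * K ≤ A := by
    have := Nat.div_mul_le_self A 20
    omega
  have h16K : 16 * K ≤ A := by omega
  have h8K : 8 * K ≤ A := by omega
  have hAR : (20:ℝ) ≤ (A:ℝ) := by exact_mod_cast hA
  have hx0 : (0:ℝ) ≤ x := le_trans (by positivity) hx1
  set m := ⌊x⌋₊ with hmdef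
  have hmx : (m:ℝ) ≤ x := Nat.floor_le hx0
  have hxm1 : x < (m:ℝ) + 1 := Nat.lt_floor_add_one x
  have hmxs : (m:ℝ) < x := lt_of_le_of_ne hmx (hxint m)
  have hAm : A < m := by
    have : (A:ℝ) < (m:ℝ) := by nlinarith
    exact_mod_cast this
  have hm3A : m ≤ 3 * A := by
    have : (m:ℝ) ≤ 3 * (A:ℝ) := le_trans hmx hx2
    exact_mod_cast this
  have h2m : 3 * A < 2 * m + 2 := by
    have : 3 * (A:ℝ) < 2 * (m:ℝ) + 2 := by nlinarith
    exact_mod_cast this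
  -- sample points and their bounds
  have hup : ∀ j : ℕ, j ≤ K → A ≤ m + 8*j ∧ m + 8*j ≤ 4*A := by
    intro j hj
    constructor
    · omega
    · omega
  have hlow : ∀ j : ℕ, j ≤ K → A ≤ m + 1 - 8*j ∧ m + 1 - 8*j ≤ 4*A ∧ 8*j ≤ m := by
    intro j hj
    omega
  -- the comparison polynomial
  set Xi : Polynomial ℝ :=
    ∏ k ∈ range K, (C ((16*(k:ℝ)+8)^2) - (C 2 * X - C (2*(m:ℝ)+1))^2) with hXidef
  have evalXi : ∀ t : ℝ, Xi.eval t
      = ∏ k ∈ range K, ((16*(k:ℝ)+8)^2 - (2*t - (2*(m:ℝ)+1))^2) := by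
    intro t
    rw [hXidef, Polynomial.eval_prod]
    apply Finset.prod_congr rfl
    intro k _
    simp
  set Xim : ℝ := ∏ k ∈ range K, ((16*(k:ℝ)+7) * (16*(k:ℝ)+9)) with hXimdef
  have hXimpos : 0 < Xim := Finset.prod_pos (fun k _ => by positivity)
  have hXim_m : Xi.eval (m:ℝ) = Xim := by
    rw [evalXi, hXimdef]
    apply Finset.prod_congr rfl
    intro k _
    ring
  have hXim_m1 : Xi.eval ((m:ℝ)+1) = Xim := by
    rw [evalXi, hXimdef]
    apply Finset.prod_congr rfl
    intro k _
    ring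
  -- star inequality at the sample points
  have hstar : ∀ j : ℕ, 1 ≤ j → j ≤ K → Xim ≤ (-1)^j * Xi.eval ((m:ℝ) + 8*j) := by
    intro j hj hjK
    have heq : Xi.eval ((m:ℝ) + 8*j)
        = ∏ k ∈ range K, ((16*(k:ℝ)+9-16*(j:ℝ)) * (16*(k:ℝ)+7+16*(j:ℝ))) := by
      rw [evalXi]
      apply Finset.prod_congr rfl
      intro k _
      ring
    rw [heq]
    exact telescope_prod K j hj hjK
  have hloweq : ∀ j : ℕ, Xi.eval ((m:ℝ) + 1 - 8*j) = Xi.eval ((m:ℝ) + 8*j) := by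
    intro j
    rw [evalXi, evalXi]
    apply Finset.prod_congr rfl
    intro k _
    ring
  -- bound at x
  have hF2 : 125 * Xi.eval x ≤ 128 * Xim := by
    have hw1 : (2*x - (2*(m:ℝ)+1))^2 ≤ 1 := by
      nlinarith [mul_pos (sub_pos.mpr hmxs) (sub_pos.mpr hxm1)]
    have hPa1 : Xi.eval x ≤ ∏ k ∈ range K, (16*(k:ℝ)+8)^2 := by
      rw [evalXi]
      apply Finset.prod_le_prod
      · intro k _
        have : (64:ℝ) ≤ (16*(k:ℝ)+8)^2 := by nlinarith [Nat.cast_nonneg (α := ℝ) k]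
        nlinarith [sq_nonneg (2*x - (2*(m:ℝ)+1))]
      · intro k _
        nlinarith [sq_nonneg (2*x - (2*(m:ℝ)+1))]
    have hPa0 : (0:ℝ) ≤ ∏ k ∈ range K, (16*(k:ℝ)+8)^2 :=
      Finset.prod_nonneg (fun k _ => sq_nonneg _)
    have hXimfac : Xim = (∏ k ∈ range K, (16*(k:ℝ)+8)^2)
        * ∏ k ∈ range K, (1 - 1/((16*(k:ℝ)+8)^2)) := by
      rw [hXimdef, ← Finset.prod_mul_distrib]
      apply Finset.prod_congr rfl
      intro k _
      have hne : ((16*(k:ℝ)+8)^2) ≠ 0 := by positivity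
      field_simp
      ring
    have hsum : ∑ k ∈ range K, 1/((16*(k:ℝ)+8)^2) ≤ 3/128 := by
      have heq : ∀ k ∈ range K, 1/((16*(k:ℝ)+8)^2) = (1/64) * (1 / (2*(k:ℝ)+1)^2) := by
        intro k _
        rw [show ((16*(k:ℝ)+8)^2) = 64 * ((2*(k:ℝ)+1)^2) by ring]
        rw [one_div, mul_inv, one_div]
        ring
      rw [Finset.sum_congr rfl heq, ← Finset.mul_sum]
      have hS := sum_inv_odd_sq K
      have : (1/64 : ℝ) * (∑ k ∈ range K, 1 / (2*(k:ℝ)+1)^2) ≤ (1/64) * (3/2) :=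
        mul_le_mul_of_nonneg_left hS (by norm_num)
      linarith
    have hwei : (125:ℝ)/128 ≤ ∏ k ∈ range K, (1 - 1/((16*(k:ℝ)+8)^2)) := by
      have h0 : ∀ k : ℕ, 0 ≤ 1/((16*(k:ℝ)+8)^2) := fun k => by positivity
      have h1 : ∀ k : ℕ, 1/((16*(k:ℝ)+8)^2) ≤ 1 := by
        intro k
        rw [div_le_one (by positivity)]
        nlinarith [Nat.cast_nonneg (α := ℝ) k]
      have := weierstrass_prod K (fun k => 1/((16*(k:ℝ)+8)^2)) h0 h1
      linarith
    nlinarith [hPa1, hPa0, hXimfac, hwei, hsum]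
  -- the auxiliary polynomial H
  set H : Polynomial ℝ := C δ * (C (2*Xim) + C 5 * Xi) - C (4*Xim) * q with hHdef
  have evalH : ∀ t : ℝ, H.eval t = δ*(2*Xim + 5*Xi.eval t) - 4*Xim*(q.eval t) := by
    intro t
    simp [hHdef]
  -- sign facts
  have hq_m := hq m (le_of_lt hAm) (by omega)
  have hq_m1 := hq (m+1) (by omega) (by omega)
  have hs_m : 0 < H.eval (m:ℝ) := by
    rw [evalH, hXim_m]
    nlinarith [hq_m.2, hXimpos]
  have hs_m1 : 0 < H.eval ((m:ℝ)+1) := by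
    have : ((m+1 : ℕ):ℝ) = (m:ℝ)+1 := by push_cast; ring
    rw [evalH, hXim_m1]
    rw [this] at hq_m1
    nlinarith [hq_m1.2, hXimpos]
  have hs_x : H.eval x < 0 := by
    rw [evalH]
    nlinarith [hF2, hXimpos, hδ]
  have hs_up : ∀ j : ℕ, 1 ≤ j → j ≤ K → 0 < (-1:ℝ)^j * H.eval ((m:ℝ) + 8*j) := by
    intro j hj hjK
    have hb := hup j hjK
    have hqj := hq (m+8*j) hb.1 hb.2
    have hc : ((m+8*j : ℕ):ℝ) = (m:ℝ) + 8*j := by push_cast; ring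
    rw [hc] at hqj
    have hst := hstar j hj hjK
    rw [evalH]
    rcases Nat.even_or_odd j with he | ho
    · have h1 : ((-1:ℝ))^j = 1 := he.neg_one_pow
      rw [h1] at hst ⊢
      nlinarith [hqj.1, hqj.2, hXimpos, hδ]
    · have h1 : ((-1:ℝ))^j = -1 := ho.neg_one_pow
      rw [h1] at hst ⊢
      nlinarith [hqj.1, hqj.2, hXimpos, hδ]
  have hs_low : ∀ j : ℕ, 1 ≤ j → j ≤ K → 0 < (-1:ℝ)^j * H.eval ((m:ℝ) + 1 - 8*j) := by
    intro j hj hjK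
    have hb := hlow j hjK
    have hqj := hq (m+1-8*j) hb.1 hb.2.1
    have hc : ((m+1-8*j : ℕ):ℝ) = (m:ℝ) + 1 - 8*j := by
      have h8 : 8*j ≤ m + 1 := by omega
      push_cast [h8]
      ring
    rw [hc] at hqj
    have hst := hstar j hj hjK
    rw [evalH, hloweq j]
    rcases Nat.even_or_odd j with he | ho
    · have h1 : ((-1:ℝ))^j = 1 := he.neg_one_pow
      rw [h1] at hst ⊢
      nlinarith [hqj.1, hqj.2, hXimpos, hδ]
    · have h1 : ((-1:ℝ))^j = -1 := ho.neg_one_pow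
      rw [h1] at hst ⊢
      nlinarith [hqj.1, hqj.2, hXimpos, hδ]
  -- degree bound for H
  have hXideg : Xi.natDegree ≤ 2 * K := by
    have hfac : ∀ k : ℕ, (C ((16*(k:ℝ)+8)^2) - (C 2 * X - C (2*(m:ℝ)+1))^2).natDegree ≤ 2 := by
      intro k
      refine le_trans (Polynomial.natDegree_sub_le _ _) ?_
      refine max_le (le_trans (le_of_eq (Polynomial.natDegree_C _)) (by omega)) ?_
      refine le_trans (Polynomial.natDegree_pow_le) ?_
      have h1 : (C (2:ℝ) * X - C (2*(m:ℝ)+1)).natDegree ≤ 1 := by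
        refine le_trans (Polynomial.natDegree_sub_le _ _) ?_
        refine max_le ?_ (le_trans (le_of_eq (Polynomial.natDegree_C _)) (by omega))
        refine le_trans (Polynomial.natDegree_C_mul_le _ _) ?_
        rw [Polynomial.natDegree_X]
      calc 2 * (C (2:ℝ) * X - C (2*(m:ℝ)+1)).natDegree ≤ 2 * 1 := by omega
        _ = 2 := by norm_num
    rw [hXidef]
    refine le_trans (Polynomial.natDegree_prod_le _ _) ?_
    refine le_trans (Finset.sum_le_sum (fun k _ => hfac k)) ?_
    simp [Finset.sum_const, Finset.card_range, mul_comm]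
  have hHdeg : H.natDegree ≤ 2 * K := by
    rw [hHdef]
    refine le_trans (Polynomial.natDegree_sub_le _ _) ?_
    refine max_le ?_ ?_
    · refine le_trans (Polynomial.natDegree_C_mul_le _ _) ?_
      refine le_trans (Polynomial.natDegree_add_le _ _) ?_
      refine max_le (le_trans (le_of_eq (Polynomial.natDegree_C _)) (by omega)) ?_
      refine le_trans (Polynomial.natDegree_C_mul_le _ _) hXideg
    · refine le_trans (Polynomial.natDegree_C_mul_le _ _) hD
  have hHne : H ≠ 0 := fun h0 => by rw [h0] at hs_m; simp at hs_m
  -- the alternation points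
  set p : ℕ → ℝ := fun i =>
    if i < K then (m:ℝ) + 1 - 8*((K:ℝ) - (i:ℝ))
    else if i = K then (m:ℝ)
    else if i = K+1 then x
    else if i = K+2 then (m:ℝ) + 1
    else (m:ℝ) + 8*((i:ℝ) - (K:ℝ) - 2) with hpdef
  have pv1 : ∀ i, i < K → p i = (m:ℝ) + 1 - 8*((K:ℝ) - (i:ℝ)) := by
    intro i hi
    simp only [hpdef]
    split_ifs with h1 h2 h3 h4 <;> first | rfl | omega
  have pv2 : p K = (m:ℝ) := by
    simp only [hpdef]
    split_ifs with h1 h2 h3 h4 <;> first | rfl | omega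
  have pv3 : p (K+1) = x := by
    simp only [hpdef]
    split_ifs with h1 h2 h3 h4 <;> first | rfl | omega
  have pv4 : p (K+2) = (m:ℝ) + 1 := by
    simp only [hpdef]
    split_ifs with h1 h2 h3 h4 <;> first | rfl | omega
  have pv5 : ∀ i, K+2 < i → p i = (m:ℝ) + 8*((i:ℝ) - (K:ℝ) - 2) := by
    intro i hi
    simp only [hpdef]
    split_ifs with h1 h2 h3 h4 <;> first | rfl | omega
  have hpmono : StrictMono p := by
    apply strictMono_nat_of_lt_succ
    intro i
    rcases lt_trichotomy (i+1) K with h1 | h1 | h1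
    · rw [pv1 i (by omega), pv1 (i+1) h1]
      push_cast
      linarith
    · rw [pv1 i (by omega), h1, pv2]
      have : ((i:ℕ):ℝ) = (K:ℝ) - 1 := by
        rw [show i = K - 1 by omega]
        have h1K : 1 ≤ K := by omega
        push_cast [Nat.cast_sub h1K]
        ring
      rw [this]
      ring_nf
      linarith
    · rcases lt_trichotomy i K with h2 | h2 | h2
      · omega
      · rw [h2, pv2, pv3]
        exact hmxs
      · rcases Nat.lt_or_ge i (K+2) with h3 | h3
        · have : i = K+1 := by omega
          rw [this, pv3, pv4]
          exact hxm1
        · rcases Nat.eq_or_lt_of_le h3 with h4 | h4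
          · rw [pv5 (i+1) (by omega), ← h4, pv4]
            push_cast
            linarith
          · rw [pv5 i h4, pv5 (i+1) (by omega)]
            push_cast
            linarith
  have hsgn : ∀ i, i ≤ 2*K+2 → 0 < (-1:ℝ)^(K+i) * H.eval (p i) := by
    intro i hi
    rcases Nat.lt_or_ge i K with h1 | h1
    · have hil : i ≤ K := le_of_lt h1
      have hlw := hs_low (K-i) (by omega) (by omega)
      have hcast : ((K-i:ℕ):ℝ) = (K:ℝ) - (i:ℝ) := by
        push_cast [Nat.cast_sub hil]
        ring
      rw [hcast] at hlw
      have hpow : (-1:ℝ)^(K+i) = (-1)^(K-i) := by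
        rw [show K+i = (K-i) + 2*i by omega, pow_add, pow_mul]
        norm_num
      rw [pv1 i h1, hpow]
      exact hlw
    · rcases Nat.eq_or_lt_of_le h1 with h2 | h2
      · rw [← h2, pv2]
        have hpow : (-1:ℝ)^(K+K) = 1 := by
          rw [← two_mul, pow_mul]
          norm_num
        rw [hpow, one_mul]
        exact hs_m
      · rcases Nat.eq_or_lt_of_le h2 with h3 | h3
        · rw [← h3, pv3]
          have hpow : (-1:ℝ)^(K+(K+1)) = -1 := by
            rw [show K+(K+1) = 2*K+1 by omega, pow_add, pow_mul]
            norm_num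
          rw [hpow]
          linarith [hs_x]
        · rcases Nat.eq_or_lt_of_le h3 with h4 | h4
          · rw [← h4, pv4]
            have hpow : (-1:ℝ)^(K+(K+2)) = 1 := by
              rw [show K+(K+2) = 2*(K+1) by omega, pow_mul]
              norm_num
            rw [hpow, one_mul]
            exact hs_m1
          · have hup' := hs_up (i-K-2) (by omega) (by omega)
            have hcast : ((i-K-2:ℕ):ℝ) = (i:ℝ) - (K:ℝ) - 2 := by
              have hKi : K+2 ≤ i := by omega
              have : i - K - 2 = i - (K+2) := by omega
              rw [this]
              push_cast [Nat.cast_sub hKi]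
              ring
            rw [hcast] at hup'
            have hpow : (-1:ℝ)^(K+i) = (-1)^(i-K-2) := by
              rw [show K+i = (i-K-2) + 2*(K+1) by omega, pow_add, pow_mul]
              norm_num
            rw [pv5 i h4, hpow]
            exact hup'
  set G : Polynomial ℝ := C ((-1:ℝ)^K) * H with hGdef
  have hGs : ∀ i, i ≤ 2*K+2 → 0 < (-1:ℝ)^i * G.eval (p i) := by
    intro i hi
    have h := hsgn i hi
    simp only [hGdef, Polynomial.eval_mul, Polynomial.eval_C]
    rw [← mul_assoc, ← pow_add, show i + K = K + i by omega]
    exact h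
  have hfinal := alt_signs_le_natDegree G (2*K+2) p hpmono hGs
  have hGdeg : G.natDegree ≤ 2*K := le_trans (Polynomial.natDegree_C_mul_le _ _) hHdeg
  omega

theorem middle_jump_degree_bound :
    ∃ c : ℝ, 0 < c ∧
      ∀ δ : ℝ, 0 < δ →
      ∀ A : ℕ, 1 ≤ A →
      ∀ q : Polynomial ℝ,
        (∀ j : ℕ, A ≤ j → j ≤ 4 * A → 0 ≤ q.eval (j : ℝ) ∧ q.eval (j : ℝ) ≤ δ) →
        (∃ x : ℝ, (3 / 2) * (A : ℝ) ≤ x ∧ x ≤ 3 * (A : ℝ) ∧ 2 * δ < q.eval x) →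
        c * (A : ℝ) ≤ (q.natDegree : ℝ) := by
  refine ⟨1/100, by norm_num, ?_⟩
  rintro δ hδ A hA q hq ⟨x, hx1, hx2, hxq⟩
  by_cases hxint : ∃ n : ℕ, (n:ℝ) = x
  · rcases hxint with ⟨n, rfl⟩
    have hA1 : (1:ℝ) ≤ (A:ℝ) := by exact_mod_cast hA
    have hAn : A ≤ n := by
      have : (A:ℝ) ≤ (n:ℝ) := by linarith
      exact_mod_cast this
    have hn4 : n ≤ 4*A := by
      have : (n:ℝ) ≤ 4*(A:ℝ) := by linarith
      exact_mod_cast this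
    have h1 := (hq n hAn hn4).2
    linarith
  · push_neg at hxint
    have hD1 : 1 ≤ q.natDegree := by
      by_contra h0
      push_neg at h0
      have h00 : q.natDegree = 0 := by omega
      rcases Polynomial.natDegree_eq_zero.mp h00 with ⟨a, rfl⟩
      have h1 := (hq A (le_refl A) (by omega)).2
      simp only [Polynomial.eval_C] at h1 hxq
      linarith
    rcases Nat.lt_or_ge A 20 with hA20 | hA20
    · have hA19 : (A:ℝ) ≤ 19 := by exact_mod_cast (by omega : A ≤ 19)
      have hD1' : (1:ℝ) ≤ (q.natDegree : ℝ) := by exact_mod_cast hD1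
      linarith
    · have hkey := key_lemma δ hδ A hA20 q hq x hx1 hx2 hxq hxint
      have hnat : A ≤ 100 * (2*(A/20)+1) := by
        have h := Nat.div_add_mod A 20
        omega
      have h1 : (A:ℝ) ≤ 100 * ((2*(A/20)+1 : ℕ) : ℝ) := by exact_mod_cast hnat
      have h2 : ((2*(A/20)+1 : ℕ):ℝ) ≤ (q.natDegree : ℝ) := by exact_mod_cast hkey
      linarith
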